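/- arXiv:2208.10005 — 6 statements merged into one kernel-verified Lean document; each statement's English description precedes it below -/
import Mathlib

section
/- Define r(A,B) = (1/2)(⟨[B,A], BA⟩ + ⟨[B,A*], B A*⟩) with real part taken implicitly via the Hilbert–Schmidt inner product; then for all n×n complex matrices A, B, Re r(A,B) ≤ ((1+√2)/2)‖A‖²‖B‖². -/
open Matrix Complex BigOperators

/-- Squared Frobenius (Hilbert-Schmidt) norm: ‖X‖² = tr(X*X). -/
noncomputable def frobSq {n : ℕ} (X : Matrix (Fin n) (Fin n) ℂ) : ℝ :=
  (Matrix.trace (Xᴴ * X)).re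

/-- Hilbert-Schmidt inner product ⟨X,Y⟩ = tr(X*Y). -/
noncomputable def hsInner {n : ℕ} (X Y : Matrix (Fin n) (Fin n) ℂ) : ℂ :=
  Matrix.trace (Xᴴ * Y)

/-- f(A,B;q) = Re⟨[B,A],[B,A]_q⟩ where [X,Y]_q = XY − qYX. -/
noncomputable def fFun {n : ℕ} (A B : Matrix (Fin n) (Fin n) ℂ) (q : ℝ) : ℝ :=
  (hsInner (B * A - A * B) (B * A - (q : ℂ) • (A * B))).re

/-- r(A,B) = (1/2)(⟨[B,A],BA⟩ + ⟨[B,A*],BA*⟩). -/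
noncomputable def rFun {n : ℕ} (A B : Matrix (Fin n) (Fin n) ℂ) : ℂ :=
  (1/2 : ℂ) * (hsInner (B * A - A * B) (B * A) + hsInner (B * Aᴴ - Aᴴ * B) (B * Aᴴ))

/-- c(q) = ((1+q) + √(2(1+q²)))/2. -/
noncomputable def cq (q : ℝ) : ℝ := ((1 + q) + Real.sqrt (2 * (1 + q ^ 2))) / 2

section Aux

variable {n : ℕ}

private lemma trace_mmd (M : Matrix (Fin n) (Fin n) ℂ) (e : Fin n → ℂ) :
    Matrix.trace (Mᴴ * M * Matrix.diagonal e) = ∑ j, ∑ i, (starRingEnd ℂ) (M i j) * M i j * e j := by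
  simp only [Matrix.trace, Matrix.diag_apply, Matrix.mul_apply, Matrix.conjTranspose_apply,
    Matrix.diagonal_apply, mul_ite, ite_mul, mul_zero, zero_mul, Finset.sum_ite_eq,
    Finset.sum_ite_eq', Finset.mem_univ, if_true]
  simp [Finset.sum_mul, Complex.star_def]

private lemma trace_mdmd (M : Matrix (Fin n) (Fin n) ℂ) (e : Fin n → ℂ) :
    Matrix.trace (Mᴴ * Matrix.diagonal e * M * Matrix.diagonal e)
      = ∑ j, ∑ i, (starRingEnd ℂ) (M i j) * e i * M i j * e j := by
  simp only [Matrix.trace, Matrix.diag_apply, Matrix.mul_apply, Matrix.conjTranspose_apply,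
    Matrix.diagonal_apply, mul_ite, ite_mul, mul_zero, zero_mul, Finset.sum_ite_eq,
    Finset.sum_ite_eq', Finset.mem_univ, if_true]
  simp [Finset.sum_mul, Complex.star_def]

private lemma scalar_key (x y : ℝ) : y * (y - x) ≤ ((1 + Real.sqrt 2)/2) * (x^2 + y^2) := by
  have h2 : Real.sqrt 2 ^ 2 = 2 := Real.sq_sqrt (by norm_num)
  nlinarith [sq_nonneg ((1 + Real.sqrt 2) * x + y), Real.sqrt_nonneg 2, sq_nonneg (x+y),
    sq_nonneg (x-y)]

private lemma pair_key (d : Fin n → ℝ) (i j : Fin n) :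
    d j * (d j - d i) ≤ ((1 + Real.sqrt 2)/2) * ∑ k, d k ^ 2 := by
  have hc : (0:ℝ) ≤ (1 + Real.sqrt 2)/2 := by positivity
  rcases eq_or_ne i j with rfl | hij
  · simp only [sub_self, mul_zero]; positivity
  · have h1 : d i ^ 2 + d j ^ 2 ≤ ∑ k, d k ^ 2 := by
      have := Finset.sum_le_sum_of_subset_of_nonneg (Finset.subset_univ ({i, j} : Finset (Fin n)))
        (fun k _ _ => sq_nonneg (d k))
      rwa [Finset.sum_pair hij] at this
    calc d j * (d j - d i) ≤ ((1 + Real.sqrt 2)/2) * (d i ^2 + d j ^2) := scalar_key _ _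
      _ ≤ ((1 + Real.sqrt 2)/2) * ∑ k, d k ^ 2 := mul_le_mul_of_nonneg_left h1 hc

private lemma diag_key (M : Matrix (Fin n) (Fin n) ℂ) (d : Fin n → ℝ) :
    (Matrix.trace (Mᴴ * M * (Matrix.diagonal (fun i => (d i : ℂ)) * Matrix.diagonal (fun i => (d i : ℂ))))
      - Matrix.trace (Mᴴ * Matrix.diagonal (fun i => (d i:ℂ)) * M * Matrix.diagonal (fun i => (d i:ℂ)))).re
    ≤ ((1 + Real.sqrt 2)/2) * (∑ k, d k ^ 2) * ∑ j, ∑ i, Complex.normSq (M i j) := by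
  rw [Matrix.diagonal_mul_diagonal, trace_mmd, trace_mdmd, Complex.sub_re, Complex.re_sum,
    Complex.re_sum, ← Finset.sum_sub_distrib]
  have hterm : ∀ j : Fin n, (∑ i, ((starRingEnd ℂ) (M i j) * M i j * ((d j:ℂ) * (d j:ℂ)))).re
      - (∑ i, ((starRingEnd ℂ) (M i j) * (d i:ℂ) * M i j * (d j:ℂ))).re
      = ∑ i, Complex.normSq (M i j) * (d j * (d j - d i)) := by
    intro j
    rw [Complex.re_sum, Complex.re_sum, ← Finset.sum_sub_distrib]
    refine Finset.sum_congr rfl fun i _ => ?_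
    have h1 : (starRingEnd ℂ) (M i j) * M i j * ((d j:ℂ) * (d j:ℂ))
        = ((Complex.normSq (M i j) * (d j * d j) : ℝ) : ℂ) := by
      rw [← Complex.normSq_eq_conj_mul_self]
      push_cast; ring
    have h2 : (starRingEnd ℂ) (M i j) * (d i:ℂ) * M i j * (d j:ℂ)
        = ((Complex.normSq (M i j) * (d i * d j) : ℝ) : ℂ) := by
      rw [show (starRingEnd ℂ) (M i j) * (d i:ℂ) * M i j * (d j:ℂ)
          = ((starRingEnd ℂ) (M i j) * M i j) * ((d i:ℂ)*(d j:ℂ)) from by ring,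
        ← Complex.normSq_eq_conj_mul_self]
      push_cast; ring
    rw [h1, h2, Complex.ofReal_re, Complex.ofReal_re]
    ring
  refine le_trans (le_of_eq (Finset.sum_congr rfl fun j _ => hterm j)) ?_
  calc ∑ j, ∑ i, Complex.normSq (M i j) * (d j * (d j - d i))
      ≤ ∑ j, ∑ i, Complex.normSq (M i j) * (((1 + Real.sqrt 2)/2) * ∑ k, d k ^ 2) := by
        refine Finset.sum_le_sum fun j _ => Finset.sum_le_sum fun i _ => ?_
        exact mul_le_mul_of_nonneg_left (pair_key d i j) (Complex.normSq_nonneg _)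
    _ = ((1 + Real.sqrt 2)/2) * (∑ k, d k ^ 2) * ∑ j, ∑ i, Complex.normSq (M i j) := by
        simp only [← Finset.sum_mul, ← Finset.mul_sum]; ring

private lemma herm_reduce (X B : Matrix (Fin n) (Fin n) ℂ) (hX : X.IsHermitian) :
    ∃ (M : Matrix (Fin n) (Fin n) ℂ) (d : Fin n → ℝ),
      Matrix.trace (X * Bᴴ * B * X) - Matrix.trace (Bᴴ * X * B * X)
        = Matrix.trace (Mᴴ * M * (Matrix.diagonal (fun i => (d i:ℂ)) * Matrix.diagonal (fun i => (d i:ℂ))))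
          - Matrix.trace (Mᴴ * Matrix.diagonal (fun i => (d i:ℂ)) * M * Matrix.diagonal (fun i => (d i:ℂ)))
      ∧ frobSq X = ∑ k, d k ^ 2
      ∧ frobSq B = ∑ j, ∑ i, Complex.normSq (M i j) := by
  classical
  set V : Matrix (Fin n) (Fin n) ℂ := (hX.eigenvectorUnitary : Matrix (Fin n) (Fin n) ℂ) with hVdef
  set d : Fin n → ℝ := hX.eigenvalues with hddef
  set D : Matrix (Fin n) (Fin n) ℂ := Matrix.diagonal (fun i => (d i : ℂ)) with hDdef
  have hX' : X = V * D * Vᴴ := by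
    have := hX.spectral_theorem
    rw [Unitary.conjStarAlgAut_apply, Matrix.star_eq_conjTranspose] at this
    exact this
  have hV1 : V * Vᴴ = 1 := by
    rw [← Matrix.star_eq_conjTranspose]
    exact (Matrix.mem_unitaryGroup_iff).mp hX.eigenvectorUnitary.2
  have hV2 : Vᴴ * V = 1 := by
    rw [← Matrix.star_eq_conjTranspose]
    exact (Matrix.mem_unitaryGroup_iff').mp hX.eigenvectorUnitary.2
  have hV1' : ∀ Z : Matrix (Fin n) (Fin n) ℂ, V * (Vᴴ * Z) = Z := fun Z => by
    rw [← Matrix.mul_assoc, hV1, Matrix.one_mul]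
  have hV2' : ∀ Z : Matrix (Fin n) (Fin n) ℂ, Vᴴ * (V * Z) = Z := fun Z => by
    rw [← Matrix.mul_assoc, hV2, Matrix.one_mul]
  set M : Matrix (Fin n) (Fin n) ℂ := Vᴴ * B * V with hMdef
  have hMH : Mᴴ = Vᴴ * Bᴴ * V := by
    simp [hMdef, Matrix.conjTranspose_mul, Matrix.mul_assoc]
  have hconj : ∀ P : Matrix (Fin n) (Fin n) ℂ, Matrix.trace (V * P * Vᴴ) = Matrix.trace P := by
    intro P
    rw [Matrix.trace_mul_cycle, hV2, Matrix.one_mul]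
  refine ⟨M, d, ?_, ?_, ?_⟩
  · have e1 : X * Bᴴ * B * X = V * (D * Mᴴ * M * D) * Vᴴ := by
      rw [hX', hMH, hMdef]
      simp only [Matrix.mul_assoc, hV1', hV2']
    have e2 : Bᴴ * X * B * X = V * (Mᴴ * D * M * D) * Vᴴ := by
      rw [hX', hMH, hMdef]
      simp only [Matrix.mul_assoc, hV1', hV2']
    rw [e1, e2, hconj, hconj]
    congr 1
    · rw [show D * Mᴴ * M * D = D * (Mᴴ * M * D) from by simp only [Matrix.mul_assoc],
        Matrix.trace_mul_comm,
        show Mᴴ * M * D * D = Mᴴ * M * (D * D) from by simp only [Matrix.mul_assoc]]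
  · have e3 : Xᴴ * X = V * (D * D) * Vᴴ := by
      rw [hX.eq, hX']
      simp only [Matrix.mul_assoc, hV1', hV2']
    rw [frobSq, e3, hconj]
    rw [Matrix.diagonal_mul_diagonal, Matrix.trace_diagonal, Complex.re_sum]
    refine Finset.sum_congr rfl fun k _ => ?_
    rw [← Complex.ofReal_mul, Complex.ofReal_re, sq]
  · have e4 : Mᴴ * M = Vᴴ * (Bᴴ * B) * V := by
      rw [hMH, hMdef]
      simp only [Matrix.mul_assoc, hV1', hV2']
    have hconj2 : Matrix.trace (Vᴴ * (Bᴴ * B) * V) = Matrix.trace (Bᴴ * B) := by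
      rw [Matrix.trace_mul_cycle, hV1, Matrix.one_mul]
    have e5 : frobSq B = (Matrix.trace (Mᴴ * M)).re := by
      rw [frobSq, e4, hconj2]
    rw [e5, Matrix.trace, Complex.re_sum]
    refine Finset.sum_congr rfl fun j _ => ?_
    rw [Matrix.diag_apply, Matrix.mul_apply, Complex.re_sum]
    refine Finset.sum_congr rfl fun i _ => ?_
    rw [Matrix.conjTranspose_apply, Complex.star_def, ← Complex.normSq_eq_conj_mul_self,
      Complex.ofReal_re]

private lemma fhat_bound (X B : Matrix (Fin n) (Fin n) ℂ) (hX : X.IsHermitian) :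
    (Matrix.trace (X * Bᴴ * B * X) - Matrix.trace (Bᴴ * X * B * X)).re
      ≤ ((1 + Real.sqrt 2)/2) * frobSq X * frobSq B := by
  obtain ⟨M, d, heq, hfx, hfb⟩ := herm_reduce X B hX
  rw [heq, hfx, hfb]
  exact diag_key M d

private lemma rFun_ident (A B : Matrix (Fin n) (Fin n) ℂ) :
    rFun A B
      = (Matrix.trace (((1/2:ℂ) • (A + Aᴴ)) * Bᴴ * B * ((1/2:ℂ) • (A + Aᴴ)))
          - Matrix.trace (Bᴴ * ((1/2:ℂ) • (A + Aᴴ)) * B * ((1/2:ℂ) • (A + Aᴴ))))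
        + (Matrix.trace (((Complex.I/2) • (Aᴴ - A)) * Bᴴ * B * ((Complex.I/2) • (Aᴴ - A)))
          - Matrix.trace (Bᴴ * ((Complex.I/2) • (Aᴴ - A)) * B * ((Complex.I/2) • (Aᴴ - A)))) := by
  simp only [rFun, hsInner, Matrix.conjTranspose_sub, Matrix.conjTranspose_mul,
    Matrix.conjTranspose_conjTranspose, Matrix.sub_mul, Matrix.mul_sub, Matrix.add_mul,
    Matrix.mul_add, smul_mul_assoc, mul_smul_comm, Matrix.trace_sub, Matrix.trace_add,
    Matrix.trace_smul, smul_smul, smul_eq_mul, Matrix.mul_assoc]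
  have hI : (Complex.I/2) * (Complex.I/2) = -(1/4 : ℂ) := by
    rw [div_mul_div_comm, Complex.I_mul_I]; norm_num
  rw [hI]; ring

private lemma hermH (A : Matrix (Fin n) (Fin n) ℂ) : ((1/2:ℂ) • (A + Aᴴ)).IsHermitian := by
  show _ᴴ = _
  simp only [Matrix.conjTranspose_smul, Matrix.conjTranspose_add,
    Matrix.conjTranspose_conjTranspose]
  rw [show star (1/2 : ℂ) = 1/2 from by simp, add_comm]

private lemma hermK (A : Matrix (Fin n) (Fin n) ℂ) : ((Complex.I/2) • (Aᴴ - A)).IsHermitian := by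
  show _ᴴ = _
  simp only [Matrix.conjTranspose_smul, Matrix.conjTranspose_sub,
    Matrix.conjTranspose_conjTranspose]
  rw [show star (Complex.I/2 : ℂ) = -(Complex.I/2) from by
      simp [Complex.star_def, map_div₀, neg_div], neg_smul, ← smul_neg, neg_sub]

private lemma frob_split (A : Matrix (Fin n) (Fin n) ℂ) :
    frobSq A = frobSq ((1/2:ℂ) • (A + Aᴴ)) + frobSq ((Complex.I/2) • (Aᴴ - A)) := by
  unfold frobSq
  rw [← Complex.add_re]
  congr 1
  simp only [Matrix.conjTranspose_smul, Matrix.conjTranspose_sub, Matrix.conjTranspose_add,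
    Matrix.conjTranspose_conjTranspose, smul_mul_assoc, mul_smul_comm, smul_smul,
    Matrix.sub_mul, Matrix.mul_sub, Matrix.add_mul, Matrix.mul_add, Matrix.trace_sub,
    Matrix.trace_add, Matrix.trace_smul, smul_eq_mul, Complex.star_def, map_div₀,
    Complex.conj_I, _root_.map_one, map_ofNat]
  rw [Matrix.trace_mul_comm A Aᴴ]
  ring_nf
  rw [Complex.I_sq]
  ring

end Aux

theorem r_sharp_bound (n : ℕ) (A B : Matrix (Fin n) (Fin n) ℂ) :
    (rFun A B).re ≤ ((1 + Real.sqrt 2) / 2) * frobSq A * frobSq B := by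
  have hB : 0 ≤ frobSq B := by
    have : frobSq B = ∑ j, ∑ i, Complex.normSq (B i j) := by
      rw [frobSq, Matrix.trace, Complex.re_sum]
      refine Finset.sum_congr rfl fun j _ => ?_
      rw [Matrix.diag_apply, Matrix.mul_apply, Complex.re_sum]
      refine Finset.sum_congr rfl fun i _ => ?_
      rw [Matrix.conjTranspose_apply, Complex.star_def, ← Complex.normSq_eq_conj_mul_self,
        Complex.ofReal_re]
    rw [this]
    exact Finset.sum_nonneg fun j _ => Finset.sum_nonneg fun i _ => Complex.normSq_nonneg _
  have h1 := fhat_bound ((1/2:ℂ) • (A + Aᴴ)) B (hermH A)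
  have h2 := fhat_bound ((Complex.I/2) • (Aᴴ - A)) B (hermK A)
  have hident := rFun_ident A B
  have hre : (rFun A B).re
      = (Matrix.trace (((1/2:ℂ) • (A + Aᴴ)) * Bᴴ * B * ((1/2:ℂ) • (A + Aᴴ)))
          - Matrix.trace (Bᴴ * ((1/2:ℂ) • (A + Aᴴ)) * B * ((1/2:ℂ) • (A + Aᴴ)))).re
        + (Matrix.trace (((Complex.I/2) • (Aᴴ - A)) * Bᴴ * B * ((Complex.I/2) • (Aᴴ - A)))
          - Matrix.trace (Bᴴ * ((Complex.I/2) • (Aᴴ - A)) * B * ((Complex.I/2) • (Aᴴ - A)))).re := by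
    rw [hident, Complex.add_re]
  rw [hre, frob_split A]
  nlinarith [h1, h2, hB]
end

section
/- If B is a normal n×n complex matrix, then r(A,B) = (1/2)‖[A,B]‖² for every n×n complex matrix A. -/
open Matrix Complex BigOperators

lemma trace_conj_sq_im {n : ℕ} (X : Matrix (Fin n) (Fin n) ℂ) :
    (Matrix.trace (Xᴴ * X)).im = 0 := by
  have := Matrix.trace_conjTranspose (Xᴴ * X)
  rw [conjTranspose_mul, conjTranspose_conjTranspose] at this
  have h := congrArg Complex.im this
  simp only [Complex.conj_im, RCLike.star_def] at h
  linarith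

theorem r_eq_half_comm_sq_of_normal (n : ℕ) (A B : Matrix (Fin n) (Fin n) ℂ)
    (hB : B * Bᴴ = Bᴴ * B) :
    rFun A B = ((1/2 : ℝ) * frobSq (A * B - B * A) : ℝ) := by
  have key : rFun A B = (1/2 : ℂ) * Matrix.trace ((A * B - B * A)ᴴ * (A * B - B * A)) := by
    have h1 : Matrix.trace (A * (Bᴴ * (B * Aᴴ))) = Matrix.trace (Bᴴ * (Aᴴ * (A * B))) := by
      calc Matrix.trace (A * (Bᴴ * (B * Aᴴ)))
          = Matrix.trace ((A * (Bᴴ * B)) * Aᴴ) := by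
            rw [show A * (Bᴴ * (B * Aᴴ)) = (A * (Bᴴ * B)) * Aᴴ by simp [Matrix.mul_assoc]]
        _ = Matrix.trace ((Aᴴ * A) * (Bᴴ * B)) := by
            rw [Matrix.trace_mul_comm, Matrix.mul_assoc]
        _ = Matrix.trace ((B * Bᴴ) * (Aᴴ * A)) := by rw [Matrix.trace_mul_comm, hB]
        _ = Matrix.trace (Bᴴ * (Aᴴ * (A * B))) := by
            rw [show (B * Bᴴ) * (Aᴴ * A) = B * (Bᴴ * (Aᴴ * A)) by simp [Matrix.mul_assoc],
              Matrix.trace_mul_comm,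
              show (Bᴴ * (Aᴴ * A)) * B = Bᴴ * (Aᴴ * (A * B)) by simp [Matrix.mul_assoc]]
    have h2 : Matrix.trace (Bᴴ * (A * (B * Aᴴ))) = Matrix.trace (Aᴴ * (Bᴴ * (A * B))) := by
      rw [show Bᴴ * (A * (B * Aᴴ)) = (Bᴴ * (A * B)) * Aᴴ by simp [Matrix.mul_assoc],
        Matrix.trace_mul_comm]
    simp only [rFun, hsInner, conjTranspose_sub, conjTranspose_mul, conjTranspose_conjTranspose,
      Matrix.sub_mul, Matrix.mul_sub, Matrix.trace_sub, Matrix.mul_assoc]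
    linear_combination (1/2 : ℂ) * h1 - (1/2 : ℂ) * h2
  rw [key]
  have hreal := trace_conj_sq_im (A * B - B * A)
  simp only [conjTranspose_sub, conjTranspose_mul] at hreal ⊢
  simp only [frobSq, conjTranspose_sub, conjTranspose_mul]
  apply Complex.ext <;>
    simp [hreal, Complex.ext_iff, Complex.mul_re, Complex.mul_im]
end

section
/- If B is a normal n×n complex matrix, then for every n×n complex matrix A, r(A,B) ≤ ‖A‖²‖B‖². -/
open Matrix Complex BigOperators

namespace RBound

variable {n : ℕ}

lemma trace_cycle4 (W X Y Z : Matrix (Fin n) (Fin n) ℂ) :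
    Matrix.trace (W*(X*(Y*Z))) = Matrix.trace (X*(Y*(Z*W))) := by
  rw [Matrix.trace_mul_comm]; simp only [mul_assoc]

lemma frobSq_eq_sum (X : Matrix (Fin n) (Fin n) ℂ) :
    frobSq X = ∑ j, ∑ i, Complex.normSq (X i j) := by
  have h : Matrix.trace (Xᴴ * X) = ∑ j, ∑ i, (starRingEnd ℂ) (X i j) * X i j := by
    simp [Matrix.trace, Matrix.mul_apply, Matrix.conjTranspose_apply, Matrix.diag]
  rw [frobSq, h, Complex.re_sum]
  refine Finset.sum_congr rfl fun j _ => ?_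
  rw [Complex.re_sum]
  refine Finset.sum_congr rfl fun i _ => ?_
  rw [mul_comm, Complex.mul_conj]
  simp

lemma frobSq_nonneg (X : Matrix (Fin n) (Fin n) ℂ) : 0 ≤ frobSq X := by
  rw [frobSq_eq_sum]
  exact Finset.sum_nonneg fun j _ => Finset.sum_nonneg fun i _ => Complex.normSq_nonneg _

/-- unitary invariance of Frobenius norm -/
lemma frobSq_conj (V X : Matrix (Fin n) (Fin n) ℂ) (h1 : Vᴴ * V = 1) :
    frobSq (V * X * Vᴴ) = frobSq X := by
  unfold frobSq
  congr 1
  have h2 : (V * X * Vᴴ)ᴴ * (V * X * Vᴴ) = V * (Xᴴ * (Vᴴ * V) * X) * Vᴴ := by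
    simp only [Matrix.conjTranspose_mul, Matrix.conjTranspose_conjTranspose]
    noncomm_ring
  rw [h2, h1, Matrix.mul_one, Matrix.trace_mul_cycle, ← Matrix.mul_assoc, h1, Matrix.one_mul]

/-- additivity of frobSq for X + I•Y when the HS inner products agree. -/
lemma frobSq_add_smul_I (X Y : Matrix (Fin n) (Fin n) ℂ)
    (h : Matrix.trace (Xᴴ * Y) = Matrix.trace (Yᴴ * X)) :
    frobSq (X + Complex.I • Y) = frobSq X + frobSq Y := by
  have hexp : (X + Complex.I • Y)ᴴ * (X + Complex.I • Y)
      = Xᴴ * X + Yᴴ * Y + (Complex.I • (Xᴴ * Y) - Complex.I • (Yᴴ * X)) := by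
    simp only [Matrix.conjTranspose_add, Matrix.conjTranspose_smul, Matrix.add_mul,
      Matrix.mul_add, Matrix.smul_mul, Matrix.mul_smul, smul_smul]
    rw [show (star Complex.I : ℂ) = -Complex.I from by simp]
    simp only [smul_add, smul_smul, neg_smul, smul_neg,
      show Complex.I * Complex.I = (-1:ℂ) from Complex.I_mul_I]
    simp only [neg_neg, one_smul, neg_smul]
    abel
  unfold frobSq
  rw [hexp, Matrix.trace_add, Matrix.trace_add, Matrix.trace_sub, Matrix.trace_smul,
    Matrix.trace_smul, h, sub_self]
  simp

/-- Commutator bound for Hermitian matrices, via the spectral theorem. -/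
lemma hermitian_comm_le (H A : Matrix (Fin n) (Fin n) ℂ) (hH : H.IsHermitian) :
    frobSq (H * A - A * H) ≤ 2 * frobSq H * frobSq A := by
  classical
  set V : Matrix (Fin n) (Fin n) ℂ := (hH.eigenvectorUnitary : Matrix (Fin n) (Fin n) ℂ) with hV
  have h1 : Vᴴ * V = 1 := by
    rw [← Matrix.star_eq_conjTranspose]
    exact (Unitary.mem_iff.mp hH.eigenvectorUnitary.2).1
  have h2 : V * Vᴴ = 1 := by
    rw [← Matrix.star_eq_conjTranspose]
    exact (Unitary.mem_iff.mp hH.eigenvectorUnitary.2).2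
  set d : Fin n → ℝ := hH.eigenvalues with hd
  set D : Matrix (Fin n) (Fin n) ℂ := Matrix.diagonal (fun i => (d i : ℂ)) with hD
  have hspec : H = V * D * Vᴴ := by
    have := hH.spectral_theorem
    rw [← Matrix.star_eq_conjTranspose]
    exact this
  set M : Matrix (Fin n) (Fin n) ℂ := Vᴴ * A * V with hM
  have hA : A = V * M * Vᴴ := by
    rw [hM]
    calc A = (V * Vᴴ) * A * (V * Vᴴ) := by rw [h2]; noncomm_ring
    _ = V * (Vᴴ * A * V) * Vᴴ := by noncomm_ring
  have hcomm : H * A - A * H = V * (D * M - M * D) * Vᴴ := by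
    rw [hspec, hA]
    calc V*D*Vᴴ*(V*M*Vᴴ) - V*M*Vᴴ*(V*D*Vᴴ)
        = V*D*(Vᴴ*V)*M*Vᴴ - V*M*(Vᴴ*V)*D*Vᴴ := by noncomm_ring
      _ = V * (D * M - M * D) * Vᴴ := by rw [h1]; noncomm_ring
  rw [hcomm, frobSq_conj _ _ h1, show frobSq A = frobSq M by rw [hA, frobSq_conj _ _ h1],
    show frobSq H = frobSq D by rw [hspec, frobSq_conj _ _ h1]]
  have hDsum : frobSq D = ∑ k, d k ^ 2 := by
    rw [frobSq_eq_sum]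
    rw [Finset.sum_comm]
    refine Finset.sum_congr rfl fun i _ => ?_
    rw [Finset.sum_eq_single i]
    · simp [hD, Matrix.diagonal_apply_eq, Complex.normSq_ofReal, sq]
    · intro j _ hji
      simp [hD, Matrix.diagonal_apply_ne' _ hji]
    · simp
  have hS : 0 ≤ ∑ k, d k ^ 2 := Finset.sum_nonneg fun k _ => sq_nonneg _
  rw [frobSq_eq_sum (D*M - M*D), hDsum, frobSq_eq_sum M]
  have key : ∀ i j, Complex.normSq ((D*M - M*D) i j)
      ≤ 2 * (∑ k, d k ^ 2) * Complex.normSq (M i j) := by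
    intro i j
    have he : (D*M - M*D) i j = ((d i - d j : ℝ) : ℂ) * M i j := by
      simp [hD, Matrix.sub_apply, Matrix.diagonal_mul, Matrix.mul_diagonal]
      ring
    rw [he, Complex.normSq_mul, Complex.normSq_ofReal]
    have hb : (d i - d j) * (d i - d j) ≤ 2 * ∑ k, d k ^ 2 := by
      rcases eq_or_ne i j with rfl | hne
      · simpa using by positivity
      · have hsub : d i ^ 2 + d j ^ 2 ≤ ∑ k, d k ^ 2 := by
          have : ∑ k ∈ ({i, j} : Finset (Fin n)), d k ^ 2 ≤ ∑ k, d k ^ 2 :=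
            Finset.sum_le_sum_of_subset_of_nonneg (Finset.subset_univ _)
              (fun k _ _ => sq_nonneg _)
          rwa [Finset.sum_pair hne] at this
        nlinarith [sq_nonneg (d i + d j)]
    have := mul_le_mul_of_nonneg_right hb (Complex.normSq_nonneg (M i j))
    linarith
  calc ∑ j, ∑ i, Complex.normSq ((D*M - M*D) i j)
      ≤ ∑ j, ∑ i, 2 * (∑ k, d k ^ 2) * Complex.normSq (M i j) :=
        Finset.sum_le_sum fun j _ => Finset.sum_le_sum fun i _ => key i j
    _ = 2 * (∑ k, d k ^ 2) * ∑ j, ∑ i, Complex.normSq (M i j) := by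
        simp_rw [← Finset.mul_sum]

lemma cross_trace (H K A : Matrix (Fin n) (Fin n) ℂ) (hH : Hᴴ = H) (hK : Kᴴ = K)
    (hcomm : H * K = K * H) :
    Matrix.trace ((H*A - A*H)ᴴ * (K*A - A*K)) = Matrix.trace ((K*A - A*K)ᴴ * (H*A - A*H)) := by
  have eL : (H*A - A*H)ᴴ * (K*A - A*K)
      = Aᴴ*(H*(K*A)) - Aᴴ*(H*(A*K)) - H*(Aᴴ*(K*A)) + H*(Aᴴ*(A*K)) := by
    simp only [Matrix.conjTranspose_sub, Matrix.conjTranspose_mul, hH, hK]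
    noncomm_ring
  have eR : (K*A - A*K)ᴴ * (H*A - A*H)
      = Aᴴ*(K*(H*A)) - Aᴴ*(K*(A*H)) - K*(Aᴴ*(H*A)) + K*(Aᴴ*(A*H)) := by
    simp only [Matrix.conjTranspose_sub, Matrix.conjTranspose_mul, hH, hK]
    noncomm_ring
  rw [eL, eR]
  simp only [Matrix.trace_add, Matrix.trace_sub]
  have h1 : Matrix.trace (Aᴴ*(H*(K*A))) = Matrix.trace (Aᴴ*(K*(H*A))) := by
    rw [show H*(K*A) = (H*K)*A by noncomm_ring, hcomm]; noncomm_ring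
  have h2 : Matrix.trace (H*(Aᴴ*(K*A))) = Matrix.trace (Aᴴ*(K*(A*H))) := trace_cycle4 _ _ _ _
  have h3 : Matrix.trace (Aᴴ*(H*(A*K))) = Matrix.trace (K*(Aᴴ*(H*A))) :=
    (trace_cycle4 K Aᴴ H A).symm
  have h4 : Matrix.trace (H*(Aᴴ*(A*K))) = Matrix.trace (K*(Aᴴ*(A*H))) := by
    rw [trace_cycle4 H Aᴴ A K, trace_cycle4 K Aᴴ A H,
      show Aᴴ*(A*(K*H)) = Aᴴ*(A*(H*K)) by rw [hcomm]]
  rw [h1, h2, h3, h4]; ring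

end RBound

theorem r_bound_of_normal (n : ℕ) (A B : Matrix (Fin n) (Fin n) ℂ)
    (hB : B * Bᴴ = Bᴴ * B) :
    (rFun A B).re ≤ frobSq A * frobSq B := by
  open RBound in
  set C : Matrix (Fin n) (Fin n) ℂ := B * A - A * B with hCdef
  -- Step 1: rFun A B = (1/2) tr(Cᴴ C)
  have e1 : Matrix.trace (A*(Bᴴ*(B*Aᴴ))) = Matrix.trace (Bᴴ*(Aᴴ*(A*B))) := by
    rw [trace_cycle4 A Bᴴ B Aᴴ,
      show Bᴴ*(B*(Aᴴ*A)) = B*(Bᴴ*(Aᴴ*A)) by rw [← Matrix.mul_assoc, ← hB, Matrix.mul_assoc],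
      trace_cycle4 B Bᴴ Aᴴ A]
  have e2 : Matrix.trace (Bᴴ*(A*(B*Aᴴ))) = Matrix.trace (Aᴴ*(Bᴴ*(A*B))) :=
    (trace_cycle4 Aᴴ Bᴴ A B).symm
  have lhs_eq : (B*Aᴴ - Aᴴ*B)ᴴ*(B*Aᴴ) = A*(Bᴴ*(B*Aᴴ)) - Bᴴ*(A*(B*Aᴴ)) := by
    simp only [Matrix.conjTranspose_sub, Matrix.conjTranspose_mul,
      Matrix.conjTranspose_conjTranspose]
    noncomm_ring
  have rhs_eq : Cᴴ*(A*B) = Aᴴ*(Bᴴ*(A*B)) - Bᴴ*(Aᴴ*(A*B)) := by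
    rw [hCdef]
    simp only [Matrix.conjTranspose_sub, Matrix.conjTranspose_mul]
    noncomm_ring
  have ht2 : hsInner (B*Aᴴ - Aᴴ*B) (B*Aᴴ) = - Matrix.trace (Cᴴ*(A*B)) := by
    rw [hsInner, lhs_eq, rhs_eq, Matrix.trace_sub, Matrix.trace_sub, e1, e2]; ring
  have hr : rFun A B = (1/2 : ℂ) * Matrix.trace (Cᴴ * C) := by
    rw [rFun, ht2, hsInner, show Cᴴ * C = Cᴴ*(B*A) - Cᴴ*(A*B) by rw [hCdef]; noncomm_ring,
      Matrix.trace_sub]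
    ring
  have hre : (rFun A B).re = (1/2) * frobSq C := by
    rw [hr, frobSq]; simp [Complex.mul_re]
  -- Step 2: Cartesian decomposition
  set H : Matrix (Fin n) (Fin n) ℂ := (1/2 : ℂ) • (B + Bᴴ) with hHdef
  set K : Matrix (Fin n) (Fin n) ℂ := (Complex.I/2 : ℂ) • (Bᴴ - B) with hKdef
  have hHh : Hᴴ = H := by
    rw [hHdef, Matrix.conjTranspose_smul, Matrix.conjTranspose_add,
      Matrix.conjTranspose_conjTranspose]
    simp [add_comm]
  have hKh : Kᴴ = K := by
    rw [hKdef, Matrix.conjTranspose_smul, Matrix.conjTranspose_sub,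
      Matrix.conjTranspose_conjTranspose]
    simp only [Complex.star_def, map_div₀, Complex.conj_I, map_ofNat]
    module
  have hBHK : B = H + Complex.I • K := by
    rw [hHdef, hKdef, smul_smul,
      show Complex.I * (Complex.I/2) = -(1/2 : ℂ) by
        rw [← mul_div_assoc, Complex.I_mul_I]; norm_num]
    module
  have hmat : (B+Bᴴ)*(Bᴴ-B) = (Bᴴ-B)*(B+Bᴴ) := by
    simp only [Matrix.add_mul, Matrix.mul_add, Matrix.sub_mul, Matrix.mul_sub]
    rw [hB]; abel
  have hHK : H * K = K * H := by
    rw [hHdef, hKdef, Matrix.smul_mul, Matrix.mul_smul, smul_smul,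
      Matrix.smul_mul, Matrix.mul_smul, smul_smul, hmat, mul_comm]
  have hfrobB : frobSq B = frobSq H + frobSq K := by
    rw [show frobSq B = frobSq (H + Complex.I • K) by rw [← hBHK]]
    exact frobSq_add_smul_I _ _ (by rw [hHh, hKh, Matrix.trace_mul_comm])
  have hC : C = (H*A - A*H) + Complex.I • (K*A - A*K) := by
    rw [hCdef, show B = H + Complex.I • K from hBHK]
    simp only [Matrix.add_mul, Matrix.mul_add, Matrix.smul_mul, Matrix.mul_smul, smul_sub]
    abel
  have hsplitC : frobSq C = frobSq (H*A - A*H) + frobSq (K*A - A*K) := by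
    rw [hC]
    exact frobSq_add_smul_I _ _ (cross_trace H K A hHh hKh hHK)
  have b1 := hermitian_comm_le H A hHh
  have b2 := hermitian_comm_le K A hKh
  have hA0 := frobSq_nonneg A
  rw [hre, hsplitC]
  nlinarith [frobSq_nonneg H, frobSq_nonneg K, hfrobB]
end

section
/- Let A be a normal n×n complex matrix and B any n×n complex matrix, and let q ∈ ℝ. Then f(A,B;q) ≤ c(q)‖A‖²‖B‖², where c(q) = ((1+q) + √(2(1+q²)))/2. -/
open Matrix Complex BigOperators

open Module Module.End in
set_option maxHeartbeats 2000000 in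
lemma normal_exists_unitary_diag {n : ℕ} (A : Matrix (Fin n) (Fin n) ℂ)
    (hA : A * Aᴴ = Aᴴ * A) :
    ∃ (U : Matrix (Fin n) (Fin n) ℂ) (d : Fin n → ℂ),
      star U * U = 1 ∧ U * star U = 1 ∧ star U * A * U = Matrix.diagonal d := by
  classical
  set H : Matrix (Fin n) (Fin n) ℂ := (1/2 : ℂ) • (A + Aᴴ) with hHdef
  set K : Matrix (Fin n) (Fin n) ℂ := (-Complex.I/2) • (A - Aᴴ) with hKdef
  have hH : H.IsHermitian := by
    show Hᴴ = H
    rw [hHdef, Matrix.conjTranspose_smul, Matrix.conjTranspose_add,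
      Matrix.conjTranspose_conjTranspose]
    congr 1
    · simp
    · rw [add_comm]
  have hK : K.IsHermitian := by
    show Kᴴ = K
    rw [hKdef, Matrix.conjTranspose_smul, Matrix.conjTranspose_sub,
      Matrix.conjTranspose_conjTranspose]
    have h1 : star (-Complex.I/2) = Complex.I/2 := by
      simp [Complex.star_def]
    rw [h1]
    have h2 : Aᴴ - A = -(A - Aᴴ) := (neg_sub _ _).symm
    rw [h2, smul_neg, ← neg_smul]
    congr 1
    ring
  have hAHK : A = H + Complex.I • K := by
    rw [hHdef, hKdef, smul_smul]
    have h3 : Complex.I * (-Complex.I/2) = 1/2 := by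
      have := Complex.I_mul_I
      linear_combination -this/2
    rw [h3]
    module
  have hcomm0 : (A + Aᴴ) * (A - Aᴴ) = (A - Aᴴ) * (A + Aᴴ) := by
    simp only [Matrix.add_mul, Matrix.mul_add, Matrix.sub_mul, Matrix.mul_sub, hA]
    abel
  have hHK : H * K = K * H := by
    rw [hHdef, hKdef, Matrix.smul_mul, Matrix.mul_smul, Matrix.smul_mul, Matrix.mul_smul,
      smul_smul, smul_smul, hcomm0, mul_comm]
  set T1 := Matrix.toEuclideanLin H with hT1def
  set T2 := Matrix.toEuclideanLin K with hT2def
  have hT1 : T1.IsSymmetric := (Matrix.isHermitian_iff_isSymmetric).mp hH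
  have hT2 : T2.IsSymmetric := (Matrix.isHermitian_iff_isSymmetric).mp hK
  have happ : ∀ (M N : Matrix (Fin n) (Fin n) ℂ) (x : EuclideanSpace ℂ (Fin n)),
      Matrix.toEuclideanLin M (Matrix.toEuclideanLin N x) = Matrix.toEuclideanLin (M * N) x := by
    intro M N x
    simp [Matrix.toEuclideanLin_apply, Matrix.mulVec_mulVec]
  have hcomm : Commute T1 T2 := by
    refine LinearMap.ext fun x => ?_
    show T1 (T2 x) = T2 (T1 x)
    rw [hT1def, hT2def, happ, happ, hHK]
  have hTeq : Matrix.toEuclideanLin A = T1 + Complex.I • T2 := by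
    rw [hT1def, hT2def]
    clear_value H K
    rw [hAHK, map_add, _root_.map_smul]
  set V : ℂ × ℂ → Submodule ℂ (EuclideanSpace ℂ (Fin n)) :=
    fun p => eigenspace T1 p.2 ⊓ eigenspace T2 p.1 with hVdef
  have hInt' : DirectSum.IsInternal V := hT1.directSum_isInternal_of_commute hT2 hcomm
  have hOrth' := LinearMap.IsSymmetric.orthogonalFamily_eigenspace_inf_eigenspace hT1 hT2
  have hfinset : {p : ℂ × ℂ | V p ≠ ⊥}.Finite := by
    apply Set.Finite.subset (Set.Finite.prod
      (Module.End.finite_hasEigenvalue (T2 : Module.End ℂ (EuclideanSpace ℂ (Fin n))))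
      (Module.End.finite_hasEigenvalue (T1 : Module.End ℂ (EuclideanSpace ℂ (Fin n)))))
    intro p hp
    obtain ⟨v, hvmem, hv0⟩ := Submodule.exists_mem_ne_zero_of_ne_bot hp
    refine Set.mem_prod.mpr ⟨?_, ?_⟩
    · exact hasEigenvalue_of_hasEigenvector ⟨hvmem.2, hv0⟩
    · exact hasEigenvalue_of_hasEigenvector ⟨hvmem.1, hv0⟩
  haveI : Fintype {p : ℂ × ℂ // V p ≠ ⊥} := hfinset.fintype
  have hInt : DirectSum.IsInternal (fun p : {p : ℂ × ℂ // V p ≠ ⊥} => V p) :=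
    (DirectSum.isInternal_ne_bot_iff).mpr hInt'
  have hOrth := hOrth'.comp
    (Subtype.val_injective : Function.Injective (Subtype.val : {p : ℂ × ℂ // V p ≠ ⊥} → ℂ × ℂ))
  have hn : finrank ℂ (EuclideanSpace ℂ (Fin n)) = n := finrank_euclideanSpace_fin
  set b := hInt.subordinateOrthonormalBasis hn hOrth with hbdef
  set μ : Fin n → {p : ℂ × ℂ // V p ≠ ⊥} :=
    fun j => hInt.subordinateOrthonormalBasisIndex hn j hOrth with hμdef
  have hsub : ∀ j, b j ∈ V (μ j : ℂ × ℂ) :=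
    fun j => hInt.subordinateOrthonormalBasis_subordinate hn j hOrth
  set d : Fin n → ℂ := fun j => ((μ j : ℂ × ℂ)).2 + Complex.I * ((μ j : ℂ × ℂ)).1 with hddef
  have hbj : ∀ j, Matrix.toEuclideanLin A (b j) = d j • (b j) := by
    intro j
    have h1 : T1 (b j) = ((μ j : ℂ × ℂ)).2 • b j := mem_eigenspace_iff.mp (hsub j).1
    have h2 : T2 (b j) = ((μ j : ℂ × ℂ)).1 • b j := mem_eigenspace_iff.mp (hsub j).2
    rw [hTeq, LinearMap.add_apply, LinearMap.smul_apply, h1, h2, smul_smul, ← add_smul, hddef]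
  have hmulvec : ∀ j, A *ᵥ ⇑(b j) = d j • ⇑(b j) := by
    intro j
    have h := congr_arg (WithLp.equiv 2 (Fin n → ℂ)) (hbj j)
    rw [WithLp.equiv_apply, Matrix.ofLp_toEuclideanLin_apply] at h
    exact h
  set U := (EuclideanSpace.basisFun (Fin n) ℂ).toBasis.toMatrix b.toBasis with hUdef
  have hUmem : U ∈ Matrix.unitaryGroup (Fin n) ℂ :=
    (EuclideanSpace.basisFun (Fin n) ℂ).toMatrix_orthonormalBasis_mem_unitary b
  have hU1 : star U * U = 1 := hUmem.1
  have hU2 : U * star U = 1 := hUmem.2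
  have hUapply : ∀ i j, U i j = (b j) i := fun i j => rfl
  have hUmulvec : ∀ j, U *ᵥ Pi.single j 1 = ⇑(b j) := by
    intro j
    simp only [Matrix.mulVec_single, hUapply, mul_one, MulOpposite.op_one, one_smul]
    rfl
  have hstarUmulvec : ∀ j, star U *ᵥ ⇑(b j) = Pi.single j 1 := by
    intro j
    rw [← hUmulvec, Matrix.mulVec_mulVec, hU1, Matrix.one_mulVec]
  refine ⟨U, d, hU1, hU2, ?_⟩
  apply Matrix.toEuclideanLin.injective
  refine Module.Basis.ext (EuclideanSpace.basisFun (Fin n) ℂ).toBasis fun i => ?_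
  simp only [Matrix.toEuclideanLin_apply, OrthonormalBasis.coe_toBasis,
    EuclideanSpace.basisFun_apply, PiLp.ofLp_single, ← Matrix.mulVec_mulVec,
    hUmulvec, hmulvec, Matrix.diagonal_mulVec_single, Matrix.mulVec_smul, hstarUmulvec,
    WithLp.toLp_smul, PiLp.toLp_single, mul_one]
  apply PiLp.ext
  intro j
  simp only [PiLp.smul_apply, EuclideanSpace.single_apply, smul_eq_mul, mul_ite, mul_one,
    mul_zero, Pi.single_apply]

lemma cq_nonneg (q : ℝ) : 0 ≤ cq q := by
  have hs : Real.sqrt (2 * (1 + q ^ 2)) ^ 2 = 2 * (1 + q ^ 2) :=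
    Real.sq_sqrt (by positivity)
  have hs0 : 0 ≤ Real.sqrt (2 * (1 + q ^ 2)) := Real.sqrt_nonneg _
  unfold cq
  nlinarith [sq_nonneg (1 + q), sq_nonneg (1 - q)]

lemma key_ineq (q : ℝ) (x y : ℂ) :
    ((starRingEnd ℂ) (y - x) * (y - (q : ℂ) * x)).re
      ≤ cq q * (Complex.normSq x + Complex.normSq y) := by
  have expand : ((starRingEnd ℂ) (y - x) * (y - (q : ℂ) * x)).re
      = Complex.normSq y + q * Complex.normSq x - (1 + q) * ((starRingEnd ℂ) x * y).re := by
    simp [Complex.mul_re, Complex.sub_re, Complex.sub_im, Complex.normSq_apply,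
      Complex.conj_re, Complex.conj_im, Complex.ofReal_re, Complex.ofReal_im]
    ring
  set a := ‖x‖ with ha
  set b := ‖y‖ with hb
  set t := ((starRingEnd ℂ) x * y).re with htdef
  have hxa : Complex.normSq x = a ^ 2 := (Complex.sq_norm x).symm
  have hyb : Complex.normSq y = b ^ 2 := (Complex.sq_norm y).symm
  have ht : |t| ≤ a * b := by
    calc |t| ≤ ‖(starRingEnd ℂ) x * y‖ := Complex.abs_re_le_norm _
    _ = a * b := by rw [norm_mul, Complex.norm_conj]
  have ht2 : t ^ 2 ≤ a ^ 2 * b ^ 2 := by nlinarith [abs_nonneg t, _root_.sq_abs t]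
  set s := Real.sqrt (2 * (1 + q ^ 2)) with hsdef
  have hs2 : s ^ 2 = 2 * (1 + q ^ 2) := Real.sq_sqrt (by positivity)
  have hs0 : 0 ≤ s := Real.sqrt_nonneg _
  rw [expand, hxa, hyb]
  have hcs : ((q - 1) * (a^2 - b^2) - 2 * (1 + q) * t) ^ 2
      ≤ s ^ 2 * (a ^ 2 + b ^ 2) ^ 2 := by
    nlinarith [sq_nonneg ((q - 1) * (2 * t) + (1 + q) * (a ^ 2 - b ^ 2)), sq_nonneg (a^2 - b^2)]
  have hP : (q - 1) * (a^2 - b^2) - 2 * (1 + q) * t ≤ s * (a ^ 2 + b ^ 2) := by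
    nlinarith [sq_nonneg (a ^ 2 + b ^ 2), mul_nonneg hs0 (by positivity : (0:ℝ) ≤ a^2 + b^2)]
  unfold cq
  nlinarith []

lemma hsInner_eq {n : ℕ} (X Y : Matrix (Fin n) (Fin n) ℂ) :
    hsInner X Y = ∑ j, ∑ i, (starRingEnd ℂ) (X i j) * Y i j := by
  unfold hsInner
  simp [Matrix.trace, Matrix.diag, Matrix.mul_apply, Matrix.conjTranspose_apply]

lemma frobSq_eq {n : ℕ} (X : Matrix (Fin n) (Fin n) ℂ) :
    frobSq X = ∑ j, ∑ i, Complex.normSq (X i j) := by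
  have : frobSq X = (hsInner X X).re := rfl
  rw [this, hsInner_eq]
  rw [Complex.re_sum]
  congr 1; ext j
  rw [Complex.re_sum]
  congr 1; ext i
  rw [← Complex.normSq_eq_conj_mul_self, Complex.ofReal_re]

lemma frobSq_nonneg {n : ℕ} (X : Matrix (Fin n) (Fin n) ℂ) : 0 ≤ frobSq X := by
  rw [frobSq_eq]
  exact Finset.sum_nonneg fun j _ => Finset.sum_nonneg fun i _ => Complex.normSq_nonneg _

lemma hsInner_conj {n : ℕ} (U X Y : Matrix (Fin n) (Fin n) ℂ)
    (h1 : star U * U = 1) (h2 : U * star U = 1) :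
    hsInner (star U * X * U) (star U * Y * U) = hsInner X Y := by
  unfold hsInner
  have hct : (star U * X * U)ᴴ = star U * Xᴴ * U := by
    simp [Matrix.conjTranspose_mul, Matrix.star_eq_conjTranspose, Matrix.mul_assoc]
  rw [hct]
  have : star U * Xᴴ * U * (star U * Y * U) = star U * (Xᴴ * Y) * U := by
    simp only [Matrix.mul_assoc]
    rw [← Matrix.mul_assoc U (star U), h2, Matrix.one_mul]
  rw [this, Matrix.trace_mul_cycle, ← Matrix.mul_assoc, h2]
  simp

lemma frobSq_conj {n : ℕ} (U X : Matrix (Fin n) (Fin n) ℂ)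
    (h1 : star U * U = 1) (h2 : U * star U = 1) :
    frobSq (star U * X * U) = frobSq X := by
  have e1 : frobSq (star U * X * U) = (hsInner (star U * X * U) (star U * X * U)).re := rfl
  have e2 : frobSq X = (hsInner X X).re := rfl
  rw [e1, e2, hsInner_conj U X X h1 h2]

lemma fFun_conj {n : ℕ} (U A B : Matrix (Fin n) (Fin n) ℂ)
    (h1 : star U * U = 1) (h2 : U * star U = 1) (q : ℝ) :
    fFun (star U * A * U) (star U * B * U) q = fFun A B q := by
  unfold fFun
  have hmul : ∀ (X Y : Matrix (Fin n) (Fin n) ℂ),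
      (star U * X * U) * (star U * Y * U) = star U * (X * Y) * U := by
    intro X Y
    simp only [Matrix.mul_assoc]
    rw [← Matrix.mul_assoc U (star U), h2, Matrix.one_mul]
  have hsub : ∀ (X Y : Matrix (Fin n) (Fin n) ℂ),
      star U * X * U - star U * Y * U = star U * (X - Y) * U := by
    intro X Y
    rw [Matrix.mul_sub, Matrix.sub_mul]
  have hsmul : (q : ℂ) • (star U * (A * B) * U) = star U * ((q : ℂ) • (A * B)) * U := by
    rw [Matrix.mul_smul, Matrix.smul_mul]
  rw [hmul, hmul, hsmul, hsub, hsub, hsInner_conj _ _ _ h1 h2]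

lemma diag_case {n : ℕ} (d : Fin n → ℂ) (B : Matrix (Fin n) (Fin n) ℂ) (q : ℝ) :
    fFun (Matrix.diagonal d) B q ≤ cq q * frobSq (Matrix.diagonal d) * frobSq B := by
  classical
  set S : ℝ := ∑ k, Complex.normSq (d k) with hS
  have hSnn : 0 ≤ S := Finset.sum_nonneg fun k _ => Complex.normSq_nonneg _
  have hfd : frobSq (Matrix.diagonal d) = S := by
    rw [frobSq_eq]
    refine Finset.sum_congr rfl fun j _ => ?_
    rw [Finset.sum_eq_single j]
    · simp [Matrix.diagonal_apply_eq]
    · intro i _ hij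
      rw [Matrix.diagonal_apply_ne d hij]
      simp
    · simp
  -- entries of the two commutator matrices
  have hX : ∀ i j, (B * Matrix.diagonal d - Matrix.diagonal d * B) i j
      = B i j * (d j - d i) := by
    intro i j
    simp [Matrix.sub_apply, Matrix.mul_diagonal, Matrix.diagonal_mul]
    ring
  have hY : ∀ i j, (B * Matrix.diagonal d - (q : ℂ) • (Matrix.diagonal d * B)) i j
      = B i j * (d j - (q : ℂ) * d i) := by
    intro i j
    simp [Matrix.sub_apply, Matrix.mul_diagonal, Matrix.diagonal_mul, Matrix.smul_apply]
    ring
  have hf : fFun (Matrix.diagonal d) B q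
      = ∑ j, ∑ i, Complex.normSq (B i j) *
          ((starRingEnd ℂ) (d j - d i) * (d j - (q : ℂ) * d i)).re := by
    unfold fFun
    rw [hsInner_eq, Complex.re_sum]
    refine Finset.sum_congr rfl fun j _ => ?_
    rw [Complex.re_sum]
    refine Finset.sum_congr rfl fun i _ => ?_
    rw [hX, hY]
    have : (starRingEnd ℂ) (B i j * (d j - d i)) * (B i j * (d j - (q : ℂ) * d i))
        = (Complex.normSq (B i j) : ℂ) *
            ((starRingEnd ℂ) (d j - d i) * (d j - (q : ℂ) * d i)) := by
      rw [_root_.map_mul, Complex.normSq_eq_conj_mul_self]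
      ring
    rw [this, Complex.re_ofReal_mul]
  rw [hf, hfd, frobSq_eq B]
  have hterm : ∀ i j : Fin n, Complex.normSq (B i j) *
      ((starRingEnd ℂ) (d j - d i) * (d j - (q : ℂ) * d i)).re
      ≤ Complex.normSq (B i j) * (cq q * S) := by
    intro i j
    rcases eq_or_ne i j with rfl | hij
    · simp only [sub_self, map_zero, zero_mul, Complex.zero_re, mul_zero]
      exact mul_nonneg (Complex.normSq_nonneg _) (mul_nonneg (cq_nonneg q) hSnn)
    · refine mul_le_mul_of_nonneg_left ?_ (Complex.normSq_nonneg _)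
      refine le_trans (key_ineq q (d i) (d j)) ?_
      refine mul_le_mul_of_nonneg_left ?_ (cq_nonneg q)
      have hsub : ({i, j} : Finset (Fin n)) ⊆ Finset.univ := Finset.subset_univ _
      have := Finset.sum_le_sum_of_subset_of_nonneg hsub
        (fun k _ _ => Complex.normSq_nonneg (d k))
      rwa [Finset.sum_pair hij] at this
  calc ∑ j, ∑ i, Complex.normSq (B i j) *
        ((starRingEnd ℂ) (d j - d i) * (d j - (q : ℂ) * d i)).re
      ≤ ∑ j, ∑ i, Complex.normSq (B i j) * (cq q * S) :=
        Finset.sum_le_sum fun j _ => Finset.sum_le_sum fun i _ => hterm i j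
    _ = cq q * S * (∑ j, ∑ i, Complex.normSq (B i j)) := by
        simp only [← Finset.sum_mul]
        ring

theorem f_bound_of_normal (n : ℕ) (A B : Matrix (Fin n) (Fin n) ℂ)
    (hA : A * Aᴴ = Aᴴ * A) (q : ℝ) :
    fFun A B q ≤ cq q * frobSq A * frobSq B := by
  obtain ⟨U, d, hU1, hU2, hdiag⟩ := normal_exists_unitary_diag A hA
  calc fFun A B q = fFun (Matrix.diagonal d) (star U * B * U) q := by
        rw [← fFun_conj U A B hU1 hU2 q, hdiag]
    _ ≤ cq q * frobSq (Matrix.diagonal d) * frobSq (star U * B * U) :=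
        diag_case d (star U * B * U) q
    _ = cq q * frobSq A * frobSq B := by
        rw [← hdiag, frobSq_conj U A hU1 hU2, frobSq_conj U B hU1 hU2]
end

section
/- For all 2×2 complex matrices A and B and all q ∈ ℝ, f(A,B;q) ≤ c(q)‖A‖²‖B‖², where c(q) = ((1+q) + √(2(1+q²)))/2. -/
open Matrix Complex BigOperators

open ComplexConjugate

lemma quadlem (m k u x y : ℝ) (hk0 : 0 ≤ k) (hu0 : 0 ≤ u)
    (hu2 : u^2 = m^2 + k^2) (hum : m ≤ u) :
    m*x^2 + k*(x*y) ≤ (m+u)/2*(x^2 + y^2) := by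
  rcases eq_or_lt_of_le hum with he | hlt
  · have hk2 : k^2 = 0 := by rw [← he] at hu2; linarith
    have hkz : k = 0 := by
      have := sq_nonneg k; nlinarith
    have hm0 : 0 ≤ m := he ▸ hu0
    rw [hkz, ← he]
    nlinarith [mul_nonneg hm0 (sq_nonneg y)]
  · nlinarith [sq_nonneg ((u-m)*x - k*y), mul_pos (sub_pos.2 hlt) (sub_pos.2 hlt)]

lemma sqrtprod (a b c : ℝ) (hb : 0 ≤ b) (hc : 0 ≤ c) (h : a^2 ≤ b * c) (ha : 0 ≤ a) :
    a ≤ Real.sqrt b * Real.sqrt c := by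
  have h2 : a ≤ Real.sqrt (b*c) := by
    have := Real.sqrt_le_sqrt h
    rwa [Real.sqrt_sq ha] at this
  rwa [Real.sqrt_mul hb] at h2

lemma amgm_sqrt (α β X Z : ℝ) (hX : 0 ≤ X) (hZ : 0 ≤ Z) :
    2*α*β*(Real.sqrt X*Real.sqrt Z) ≤ α^2*X + β^2*Z := by
  nlinarith [sq_nonneg (α*Real.sqrt X - β*Real.sqrt Z), Real.sq_sqrt hX,
    Real.sq_sqrt hZ]

lemma core (q W h s t α β P R : ℝ)
    (hW : 0 ≤ W) (hh : 0 ≤ h) (hs : 0 ≤ s) (ht : 0 ≤ t)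
    (hα : 0 ≤ α) (hβ : 0 ≤ β) (hP : 0 ≤ P) (hR : 0 ≤ R)
    (h1 : W^2 + h^2 = s^2*t^2)
    (h2 : P^2*s^2 + R^2*t^2 ≤ W^4 + 2*P*R*h)
    (h3 : P ≤ W*t) (h4 : R ≤ W*s) :
    (1 + q) * W^2 + |1 - q| * (α*P + β*R) ≤ cq q * ((α^2+s^2) * (β^2+t^2)) := by
  have hk0 : (0:ℝ) ≤ |1 - q| := abs_nonneg _
  have hu0 : 0 ≤ Real.sqrt (2 * (1 + q ^ 2)) := Real.sqrt_nonneg _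
  have hu2 : (Real.sqrt (2 * (1 + q ^ 2)))^2 = (1+q)^2 + |1 - q|^2 := by
    rw [Real.sq_sqrt (by positivity), _root_.sq_abs]; ring
  have hum : 1 + q ≤ Real.sqrt (2 * (1 + q ^ 2)) := by
    nlinarith [_root_.sq_abs (1 - q), sq_nonneg (1 - q),
      sq_nonneg (Real.sqrt (2 * (1 + q ^ 2)) + (1+q))]
  have hX : 0 ≤ W^2*t^2 - P^2 := by nlinarith [mul_nonneg hW ht]
  have hZ : 0 ≤ W^2*s^2 - R^2 := by nlinarith [mul_nonneg hW hs]
  have starstar : P*R ≤ W^2*h +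
      Real.sqrt (W^2*t^2 - P^2) * Real.sqrt (W^2*s^2 - R^2) := by
    by_cases hc : P*R ≤ W^2*h
    · have : 0 ≤ Real.sqrt (W^2*t^2 - P^2) * Real.sqrt (W^2*s^2 - R^2) :=
        mul_nonneg (Real.sqrt_nonneg _) (Real.sqrt_nonneg _)
      linarith
    · push_neg at hc
      have key : (P*R - W^2*h)^2 ≤ (W^2*t^2 - P^2) * (W^2*s^2 - R^2) := by
        have expand : (W^2*t^2 - P^2) * (W^2*s^2 - R^2) - (P*R - W^2*h)^2
            = W^2*((W^4 + 2*P*R*h) - (P^2*s^2 + R^2*t^2))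
              + (W^4*(s^2*t^2) - W^4*(W^2+h^2)) := by ring
        have t1 : 0 ≤ W^2*((W^4 + 2*P*R*h) - (P^2*s^2 + R^2*t^2)) :=
          mul_nonneg (sq_nonneg W) (by linarith)
        have t2 : W^4*(s^2*t^2) - W^4*(W^2+h^2) = 0 := by rw [h1]; ring
        linarith [expand, t1, t2]
      have h6 := sqrtprod (P*R - W^2*h) _ _ hX hZ
        (by rw [mul_comm (W^2*t^2 - P^2)] at key ⊢; exact key) (by linarith)
      linarith [h6]
  have e2 := amgm_sqrt α β _ _ hX hZ
  have e3 : 2*α*β*(W^2*h) ≤ W^2*(α^2*β^2 + h^2) := by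
    nlinarith [sq_nonneg (α*β - h), sq_nonneg W]
  have e1 : 2*(α*β)*(P*R) ≤ 2*α*β*(W^2*h) +
      2*α*β*(Real.sqrt (W^2*t^2 - P^2)*Real.sqrt (W^2*s^2 - R^2)) := by
    have hab : (0:ℝ) ≤ 2*(α*β) := by positivity
    have h7 := mul_le_mul_of_nonneg_left starstar hab
    linarith [h7]
  have star : (α*P + β*R)^2 ≤ W^2 * (α^2*β^2 + α^2*t^2 + β^2*s^2 + h^2) := by
    linarith [e1, e2, e3]
  have hY : (0:ℝ) ≤ α^2*β^2 + α^2*t^2 + β^2*s^2 + h^2 := by positivity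
  have hS0 : (0:ℝ) ≤ α*P + β*R := by positivity
  have hSW : α*P + β*R ≤ W * Real.sqrt (α^2*β^2 + α^2*t^2 + β^2*s^2 + h^2) := by
    have := sqrtprod (α*P + β*R) (W^2) _ (sq_nonneg W) hY star hS0
    rwa [Real.sqrt_sq hW] at this
  have hq := quadlem (1+q) (|1 - q|) (Real.sqrt (2 * (1 + q ^ 2))) W
    (Real.sqrt (α^2*β^2 + α^2*t^2 + β^2*s^2 + h^2)) hk0 hu0 hu2 hum
  have hsY2 : (Real.sqrt (α^2*β^2 + α^2*t^2 + β^2*s^2 + h^2))^2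
      = α^2*β^2 + α^2*t^2 + β^2*s^2 + h^2 := Real.sq_sqrt hY
  have hprod : (α^2+s^2) * (β^2+t^2)
      = W^2 + (α^2*β^2 + α^2*t^2 + β^2*s^2 + h^2) := by linear_combination -h1
  have hcq : cq q = ((1+q) + Real.sqrt (2 * (1 + q ^ 2)))/2 := rfl
  have step1 : (1 + q) * W^2 + |1 - q| * (α*P + β*R)
      ≤ (1 + q) * W^2 + |1 - q| * (W * Real.sqrt (α^2*β^2 + α^2*t^2 + β^2*s^2 + h^2)) :=
    add_le_add_right (mul_le_mul_of_nonneg_left hSW hk0) _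
  rw [hcq, hprod]
  calc (1 + q) * W^2 + |1 - q| * (α*P + β*R)
      ≤ (1 + q) * W^2 + |1 - q| * (W * Real.sqrt (α^2*β^2 + α^2*t^2 + β^2*s^2 + h^2)) := step1
    _ ≤ ((1+q) + Real.sqrt (2 * (1 + q ^ 2)))/2
        * (W^2 + (Real.sqrt (α^2*β^2 + α^2*t^2 + β^2*s^2 + h^2))^2) := hq
    _ = ((1+q) + Real.sqrt (2 * (1 + q ^ 2)))/2
        * (W^2 + (α^2*β^2 + α^2*t^2 + β^2*s^2 + h^2)) := by rw [hsY2]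

/-- Lagrange identity for complex 3-vectors. -/
lemma lagrange3 (x1 x2 x3 y1 y2 y3 : ℂ) :
    normSq (x2*y3 - x3*y2) + normSq (x3*y1 - x1*y3) + normSq (x1*y2 - x2*y1)
      + normSq (conj x1*y1 + conj x2*y2 + conj x3*y3)
    = (normSq x1 + normSq x2 + normSq x3) * (normSq y1 + normSq y2 + normSq y3) := by
  simp only [Complex.normSq_apply, Complex.mul_re, Complex.mul_im, Complex.sub_re,
    Complex.sub_im, Complex.add_re, Complex.add_im, Complex.conj_re, Complex.conj_im]
  ring

/-- Cauchy-Schwarz for complex 3-vectors. -/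
lemma cs3 (x1 x2 x3 y1 y2 y3 : ℂ) :
    normSq (conj x1*y1 + conj x2*y2 + conj x3*y3)
      ≤ (normSq x1 + normSq x2 + normSq x3) * (normSq y1 + normSq y2 + normSq y3) := by
  have h := lagrange3 x1 x2 x3 y1 y2 y3
  have n1 := Complex.normSq_nonneg (x2*y3 - x3*y2)
  have n2 := Complex.normSq_nonneg (x3*y1 - x1*y3)
  have n3 := Complex.normSq_nonneg (x1*y2 - x2*y1)
  linarith

lemma expand3 (p r a1 a2 a3 b1 b2 b3 : ℂ) :
    normSq (r*b1 - p*a1) + normSq (r*b2 - p*a2) + normSq (r*b3 - p*a3)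
    = normSq r * (normSq b1 + normSq b2 + normSq b3)
      + normSq p * (normSq a1 + normSq a2 + normSq a3)
      - 2*(conj r * p * (conj b1*a1 + conj b2*a2 + conj b3*a3)).re := by
  simp only [Complex.normSq_apply, Complex.mul_re, Complex.mul_im, Complex.sub_re,
    Complex.sub_im, Complex.add_re, Complex.add_im, Complex.conj_re, Complex.conj_im]
  ring
lemma pauli_main (q : ℝ) (a0 a1 a2 a3 b0 b1 b2 b3 w1 w2 w3 p r : ℂ)
    (hw1 : w1 = b2*a3 - b3*a2) (hw2 : w2 = b3*a1 - b1*a3) (hw3 : w3 = b1*a2 - b2*a1)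
    (hp : p = conj w1*b1 + conj w2*b2 + conj w3*b3)
    (hr : r = conj w1*a1 + conj w2*a2 + conj w3*a3) :
    4*(1+q)*(normSq w1 + normSq w2 + normSq w3) + 4*(1-q)*((a0*p + b0*r).im)
      ≤ 4 * cq q * ((normSq a0 + (normSq a1 + normSq a2 + normSq a3))
        * (normSq b0 + (normSq b1 + normSq b2 + normSq b3))) := by
  set Sw : ℝ := normSq w1 + normSq w2 + normSq w3 with hSw
  set Sa : ℝ := normSq a1 + normSq a2 + normSq a3 with hSa
  set Sb : ℝ := normSq b1 + normSq b2 + normSq b3 with hSb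
  have hSw0 : 0 ≤ Sw := by
    have := Complex.normSq_nonneg w1; have := Complex.normSq_nonneg w2
    have := Complex.normSq_nonneg w3; rw [hSw]; linarith
  have hSa0 : 0 ≤ Sa := by
    have := Complex.normSq_nonneg a1; have := Complex.normSq_nonneg a2
    have := Complex.normSq_nonneg a3; rw [hSa]; linarith
  have hSb0 : 0 ≤ Sb := by
    have := Complex.normSq_nonneg b1; have := Complex.normSq_nonneg b2
    have := Complex.normSq_nonneg b3; rw [hSb]; linarith
  -- real quantities
  set W : ℝ := Real.sqrt Sw with hWd
  set s : ℝ := Real.sqrt Sa with hsd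
  set t : ℝ := Real.sqrt Sb with htd
  set α : ℝ := ‖a0‖ with hαd
  set β : ℝ := ‖b0‖ with hβd
  set P : ℝ := ‖p‖ with hPd
  set R : ℝ := ‖r‖ with hRd
  set ip : ℂ := conj a1*b1 + conj a2*b2 + conj a3*b3 with hipd
  set h : ℝ := ‖ip‖ with hhd
  have hW2 : W^2 = Sw := Real.sq_sqrt hSw0
  have hs2 : s^2 = Sa := Real.sq_sqrt hSa0
  have ht2 : t^2 = Sb := Real.sq_sqrt hSb0
  have hα2 : α^2 = normSq a0 := Complex.sq_norm a0
  have hβ2 : β^2 = normSq b0 := Complex.sq_norm b0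
  have hP2 : P^2 = normSq p := Complex.sq_norm p
  have hR2 : R^2 = normSq r := Complex.sq_norm r
  have hh2 : h^2 = normSq ip := Complex.sq_norm ip
  -- conj of ip
  have hipba : conj b1*a1 + conj b2*a2 + conj b3*a3 = conj ip := by
    rw [hipd]; simp only [_root_.map_add, _root_.map_mul, Complex.conj_conj]; ring
  -- h1 : W^2 + h^2 = s^2 * t^2
  have lag := lagrange3 b1 b2 b3 a1 a2 a3
  rw [← hw1, ← hw2, ← hw3, hipba, Complex.normSq_conj] at lag
  have h1 : W^2 + h^2 = s^2*t^2 := by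
    rw [hW2, hh2, hs2, ht2, hSw, hSa, hSb]
    linarith [lag]
  -- cross identity (w̄ × w) = r·b - p·a
  have ci1 : conj w2 * w3 - conj w3 * w2 = r*b1 - p*a1 := by
    rw [hp, hr, hw1, hw2, hw3]
    simp only [_root_.map_sub, _root_.map_mul]; ring
  have ci2 : conj w3 * w1 - conj w1 * w3 = r*b2 - p*a2 := by
    rw [hp, hr, hw1, hw2, hw3]
    simp only [_root_.map_sub, _root_.map_mul]; ring
  have ci3 : conj w1 * w2 - conj w2 * w1 = r*b3 - p*a3 := by
    rw [hp, hr, hw1, hw2, hw3]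
    simp only [_root_.map_sub, _root_.map_mul]; ring
  -- Lagrange on (conj w, w)
  have lag2 := lagrange3 (conj w1) (conj w2) (conj w3) w1 w2 w3
  simp only [Complex.conj_conj, Complex.normSq_conj] at lag2
  rw [ci1, ci2, ci3] at lag2
  have exp3 := expand3 p r a1 a2 a3 b1 b2 b3
  rw [hipba] at exp3
  have hre : (conj r * p * conj ip).re ≤ R * P * h := by
    calc (conj r * p * conj ip).re ≤ ‖conj r * p * conj ip‖ :=
          Complex.re_le_norm _
      _ = R * P * h := by
          rw [norm_mul, norm_mul, Complex.norm_conj, Complex.norm_conj, hRd, hPd, hhd]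
  have hwsq : normSq (w1*w1 + w2*w2 + w3*w3) ≥ 0 := Complex.normSq_nonneg _
  have h2 : P^2*s^2 + R^2*t^2 ≤ W^4 + 2*P*R*h := by
    have hW4 : W^4 = Sw * Sw := by
      have : W^4 = (W^2)*(W^2) := by ring
      rw [this, hW2]
    rw [hP2, hR2, hs2, ht2, hW4, hSa, hSb, hSw]
    linarith [lag2, exp3, hre, hwsq]
  -- h3 : P ≤ W * t
  have h3 : P ≤ W * t := by
    have hcs := cs3 w1 w2 w3 b1 b2 b3
    rw [← hp] at hcs
    have : ‖p‖ ≤ Real.sqrt (Sw * Sb) := by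
      rw [Complex.norm_def]
      apply Real.sqrt_le_sqrt
      rw [hSw, hSb]; exact hcs
    rwa [Real.sqrt_mul hSw0, ← hWd, ← htd, ← hPd] at this
  have h4 : R ≤ W * s := by
    have hcs := cs3 w1 w2 w3 a1 a2 a3
    rw [← hr] at hcs
    have : ‖r‖ ≤ Real.sqrt (Sw * Sa) := by
      rw [Complex.norm_def]
      apply Real.sqrt_le_sqrt
      rw [hSw, hSa]; exact hcs
    rwa [Real.sqrt_mul hSw0, ← hWd, ← hsd, ← hRd] at this
  have hcore := core q W h s t α β P R (Real.sqrt_nonneg _) (norm_nonneg _)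
    (Real.sqrt_nonneg _) (Real.sqrt_nonneg _) (norm_nonneg _)
    (norm_nonneg _) (norm_nonneg _) (norm_nonneg _)
    h1 h2 h3 h4
  -- imaginary part bound
  have him : (1-q)*((a0*p + b0*r).im) ≤ |1 - q| * (α*P + β*R) := by
    have i1 : |(a0*p + b0*r).im| ≤ α*P + β*R := by
      calc |(a0*p + b0*r).im| ≤ ‖a0*p + b0*r‖ := Complex.abs_im_le_norm _
        _ ≤ ‖a0*p‖ + ‖b0*r‖ := norm_add_le _ _
        _ = α*P + β*R := by rw [norm_mul, norm_mul, hαd, hPd, hβd, hRd]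
    calc (1-q)*((a0*p + b0*r).im) ≤ |(1-q)*((a0*p + b0*r).im)| := le_abs_self _
      _ = |1 - q| * |(a0*p + b0*r).im| := abs_mul _ _
      _ ≤ |1 - q| * (α*P + β*R) := mul_le_mul_of_nonneg_left i1 (abs_nonneg _)
  have hfin : (1+q)*Sw = (1+q)*W^2 := by rw [hW2]
  have hrhs : (normSq a0 + Sa) * (normSq b0 + Sb) = (α^2+s^2)*(β^2+t^2) := by
    rw [hα2, hs2, hβ2, ht2]
  rw [hrhs]
  linarith [hcore, him, hfin]

theorem f_bound_two_by_two (A B : Matrix (Fin 2) (Fin 2) ℂ) (q : ℝ) :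
    fFun A B q ≤ cq q * frobSq A * frobSq B := by
  set a0 : ℂ := (A 0 0 + A 1 1)/2 with ha0
  set a1 : ℂ := (A 0 1 + A 1 0)/2 with ha1
  set a2 : ℂ := Complex.I*(A 0 1 - A 1 0)/2 with ha2
  set a3 : ℂ := (A 0 0 - A 1 1)/2 with ha3
  set b0 : ℂ := (B 0 0 + B 1 1)/2 with hb0
  set b1 : ℂ := (B 0 1 + B 1 0)/2 with hb1
  set b2 : ℂ := Complex.I*(B 0 1 - B 1 0)/2 with hb2
  set b3 : ℂ := (B 0 0 - B 1 1)/2 with hb3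
  have hA00 : A 0 0 = a0 + a3 := by rw [ha0, ha3]; ring
  have hA11 : A 1 1 = a0 - a3 := by rw [ha0, ha3]; ring
  have hA01 : A 0 1 = a1 - Complex.I*a2 := by
    rw [ha1, ha2]; linear_combination ((A 0 1 - A 1 0)/2) * Complex.I_sq
  have hA10 : A 1 0 = a1 + Complex.I*a2 := by
    rw [ha1, ha2]; linear_combination ((A 1 0 - A 0 1)/2) * Complex.I_sq
  have hB00 : B 0 0 = b0 + b3 := by rw [hb0, hb3]; ring
  have hB11 : B 1 1 = b0 - b3 := by rw [hb0, hb3]; ring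
  have hB01 : B 0 1 = b1 - Complex.I*b2 := by
    rw [hb1, hb2]; linear_combination ((B 0 1 - B 1 0)/2) * Complex.I_sq
  have hB10 : B 1 0 = b1 + Complex.I*b2 := by
    rw [hb1, hb2]; linear_combination ((B 1 0 - B 0 1)/2) * Complex.I_sq
  have key := pauli_main q a0 a1 a2 a3 b0 b1 b2 b3
    (b2*a3 - b3*a2) (b3*a1 - b1*a3) (b1*a2 - b2*a1)
    (conj (b2*a3 - b3*a2)*b1 + conj (b3*a1 - b1*a3)*b2 + conj (b1*a2 - b2*a1)*b3)
    (conj (b2*a3 - b3*a2)*a1 + conj (b3*a1 - b1*a3)*a2 + conj (b1*a2 - b2*a1)*a3)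
    rfl rfl rfl rfl rfl
  have E2a : frobSq A = 2*(normSq a0 + (normSq a1 + normSq a2 + normSq a3)) := by
    simp only [frobSq, Matrix.trace_fin_two, Matrix.mul_apply, Fin.sum_univ_two,
      Matrix.conjTranspose_apply]
    rw [hA00, hA01, hA10, hA11]
    simp only [Complex.star_def, _root_.map_add, _root_.map_sub, _root_.map_mul, Complex.conj_I,
      Complex.normSq_apply, Complex.add_re, Complex.add_im, Complex.sub_re,
      Complex.sub_im, Complex.mul_re, Complex.mul_im, Complex.neg_re, Complex.neg_im,
      Complex.conj_re, Complex.conj_im, Complex.I_re, Complex.I_im]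
    ring
  have E2b : frobSq B = 2*(normSq b0 + (normSq b1 + normSq b2 + normSq b3)) := by
    simp only [frobSq, Matrix.trace_fin_two, Matrix.mul_apply, Fin.sum_univ_two,
      Matrix.conjTranspose_apply]
    rw [hB00, hB01, hB10, hB11]
    simp only [Complex.star_def, _root_.map_add, _root_.map_sub, _root_.map_mul, Complex.conj_I,
      Complex.normSq_apply, Complex.add_re, Complex.add_im, Complex.sub_re,
      Complex.sub_im, Complex.mul_re, Complex.mul_im, Complex.neg_re, Complex.neg_im,
      Complex.conj_re, Complex.conj_im, Complex.I_re, Complex.I_im]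
    ring
  have E1 : fFun A B q = 4*(1+q)*(normSq (b2*a3 - b3*a2) + normSq (b3*a1 - b1*a3)
        + normSq (b1*a2 - b2*a1))
      + 4*(1-q)*((a0*(conj (b2*a3 - b3*a2)*b1 + conj (b3*a1 - b1*a3)*b2
          + conj (b1*a2 - b2*a1)*b3)
        + b0*(conj (b2*a3 - b3*a2)*a1 + conj (b3*a1 - b1*a3)*a2
          + conj (b1*a2 - b2*a1)*a3)).im) := by
    simp only [fFun, hsInner, Matrix.trace_fin_two, Matrix.mul_apply, Fin.sum_univ_two,
      Matrix.conjTranspose_apply, Matrix.sub_apply, Matrix.smul_apply, smul_eq_mul]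
    rw [hA00, hA01, hA10, hA11, hB00, hB01, hB10, hB11]
    simp only [Complex.star_def, _root_.map_add, _root_.map_sub, _root_.map_mul, Complex.conj_I,
      Complex.normSq_apply, Complex.add_re, Complex.add_im, Complex.sub_re,
      Complex.sub_im, Complex.mul_re, Complex.mul_im, Complex.neg_re, Complex.neg_im,
      Complex.conj_re, Complex.conj_im, Complex.I_re, Complex.I_im,
      Complex.ofReal_re, Complex.ofReal_im]
    ring
  rw [E1, E2a, E2b]
  calc _ ≤ 4 * cq q * ((normSq a0 + (normSq a1 + normSq a2 + normSq a3))
        * (normSq b0 + (normSq b1 + normSq b2 + normSq b3))) := key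
    _ = cq q * (2*(normSq a0 + (normSq a1 + normSq a2 + normSq a3)))
        * (2*(normSq b0 + (normSq b1 + normSq b2 + normSq b3))) := by ring
end

section
/- For each n ≥ 2 and each q ∈ ℝ, the bound f(A,B;q) ≤ c(q)‖A‖²‖B‖² is sharp: with c = c(q) and ε₁ = sign (+1 if q ≥ −1, −1 otherwise), the matrices A with A₁₁ = √(c−1), A₂₂ = −ε₁√(c−q), all other entries zero, and B with B₁₂ = 1, all other entries zero, satisfy f(A,B;q) = c(q)‖A‖²‖B‖². -/
open Matrix Complex BigOperators

lemma conjT_std {n : ℕ} (i j : Fin n) (c : ℂ) :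
    (Matrix.single i j c)ᴴ = Matrix.single j i (star c) := by
  ext a b
  simp only [Matrix.conjTranspose_apply, Matrix.single, Matrix.of_apply,
    apply_ite star, star_zero, and_comm]

lemma std_sub {n : ℕ} (i j : Fin n) (x y : ℂ) :
    Matrix.single i j x - Matrix.single i j y
      = Matrix.single i j (x - y) := by
  ext a b
  simp only [Matrix.sub_apply, Matrix.single, Matrix.of_apply]
  split_ifs <;> simp

lemma std_smul {n : ℕ} (i j : Fin n) (r x : ℂ) :
    r • Matrix.single i j x = Matrix.single i j (r * x) := by
  ext a b
  simp only [Matrix.smul_apply, Matrix.single, Matrix.of_apply, smul_eq_mul]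
  split_ifs <;> simp

theorem f_bound_sharp (n : ℕ) (hn : 2 ≤ n) (q : ℝ) :
    let c := cq q
    let ε₁ : ℝ := if q ≥ -1 then 1 else -1
    let A : Matrix (Fin n) (Fin n) ℂ := Matrix.of fun i j =>
      if (i : ℕ) = 0 ∧ (j : ℕ) = 0 then ((Real.sqrt (c - 1) : ℝ) : ℂ)
      else if (i : ℕ) = 1 ∧ (j : ℕ) = 1 then ((-(ε₁ * Real.sqrt (c - q)) : ℝ) : ℂ)
      else 0
    let B : Matrix (Fin n) (Fin n) ℂ := Matrix.of fun i j =>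
      if (i : ℕ) = 0 ∧ (j : ℕ) = 1 then 1 else 0
    fFun A B q = cq q * frobSq A * frobSq B := by
  intro c ε₁ A B
  set s := Real.sqrt (2 * (1 + q ^ 2)) with hs_def
  have hs0 : 0 ≤ s := Real.sqrt_nonneg _
  have hs2 : s ^ 2 = 2 * (1 + q ^ 2) := Real.sq_sqrt (by positivity)
  have hc : c = ((1 + q) + s) / 2 := rfl
  have hc1 : 0 ≤ c - 1 := by nlinarith [sq_nonneg (1 + q), sq_nonneg (s - (1 - q))]
  have hcq : 0 ≤ c - q := by nlinarith [sq_nonneg (1 + q), sq_nonneg (s - (q - 1))]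
  set a := Real.sqrt (c - 1) with ha_def
  set b := Real.sqrt (c - q) with hb_def
  have ha2 : a ^ 2 = c - 1 := Real.sq_sqrt hc1
  have hb2 : b ^ 2 = c - q := Real.sq_sqrt hcq
  have hprod : (c - 1) * (c - q) = ((1 + q) / 2) ^ 2 := by
    rw [hc]; ring_nf; nlinarith [hs2]
  have hab : a * b = |1 + q| / 2 := by
    rw [ha_def, hb_def, ← Real.sqrt_mul hc1, hprod, Real.sqrt_sq_eq_abs, abs_div]
    norm_num
  have hε : ε₁ = if q ≥ -1 then 1 else -1 := rfl
  have hε2 : ε₁ ^ 2 = 1 := by rw [hε]; split_ifs <;> norm_num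
  have heab : ε₁ * (a * b) = (1 + q) / 2 := by
    rw [hab, hε]
    by_cases hq : q ≥ -1
    · rw [if_pos hq, _root_.abs_of_nonneg (by linarith)]; ring
    · rw [if_neg hq, _root_.abs_of_nonpos (by linarith)]; ring
  -- the key scalar identity
  have key : ((-(ε₁ * b)) - a) * ((-(ε₁ * b)) - q * a) = c * (a ^ 2 + (-(ε₁ * b)) ^ 2) := by
    nlinarith [ha2, hb2, hε2, heab, hprod, sq_nonneg (ε₁ * b)]
  -- matrix part
  have h2 : 0 < n := by omega
  let i0 : Fin n := ⟨0, by omega⟩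
  let i1 : Fin n := ⟨1, by omega⟩
  have h01 : i0 ≠ i1 := by simp [i0, i1, Fin.ext_iff]
  have h10 : i1 ≠ i0 := h01.symm
  set av : ℂ := ((a : ℝ) : ℂ) with hav
  set bv : ℂ := ((-(ε₁ * b) : ℝ) : ℂ) with hbv
  have hA : A = Matrix.single i0 i0 av + Matrix.single i1 i1 bv := by
    ext i j
    simp only [Matrix.add_apply, Matrix.single, Matrix.of_apply, A, Fin.ext_iff, i0, i1]
    split_ifs <;>
      first
        | omega
        | (rw [hav, ha_def]; push_cast; ring)
        | (rw [hbv, hb_def]; push_cast; ring)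
        | (rw [hav, hbv, ha_def, hb_def]; push_cast; ring)
        | simp
  have hB : B = Matrix.single i0 i1 (1 : ℂ) := by
    ext i j
    simp only [Matrix.single, Matrix.of_apply, B, Fin.ext_iff, i0, i1]
    split_ifs <;> first | omega | simp
  have hBA : B * A = Matrix.single i0 i1 bv := by
    rw [hA, hB, Matrix.mul_add, Matrix.single_mul_single_of_ne (c := 1) i0 i1 i0 h10 av,
      Matrix.single_mul_single_same, zero_add, one_mul]
  have hAB : A * B = Matrix.single i0 i1 av := by
    rw [hA, hB, Matrix.add_mul, Matrix.single_mul_single_same,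
      Matrix.single_mul_single_of_ne (c := bv) i1 i1 i0 h10 1, add_zero, mul_one]
  have hf : fFun A B q = ((bv - av) * (bv - (q : ℂ) * av)).re := by
    have : starRingEnd ℂ (bv - av) = bv - av := by
      rw [hav, hbv]; simp [← Complex.ofReal_sub]
    rw [fFun, hsInner, hBA, hAB, std_smul, std_sub, std_sub, conjT_std,
      Matrix.single_mul_single_same, Matrix.trace_single_eq_same]
    rw [show star (bv - av) = starRingEnd ℂ (bv - av) from rfl, this]
  have hfA : frobSq A = a ^ 2 + (-(ε₁ * b)) ^ 2 := by
    rw [frobSq, hA]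
    rw [Matrix.conjTranspose_add, conjT_std, conjT_std, Matrix.add_mul, Matrix.mul_add,
      Matrix.mul_add, Matrix.single_mul_single_same, Matrix.single_mul_single_same,
      Matrix.single_mul_single_of_ne (c := star av) i0 i0 i1 h01 bv,
      Matrix.single_mul_single_of_ne (c := star bv) i1 i1 i0 h10 av]
    rw [add_zero, zero_add, Matrix.trace_add, Matrix.trace_single_eq_same,
      Matrix.trace_single_eq_same]
    rw [hav, hbv]
    simp [← Complex.ofReal_mul, ← Complex.ofReal_add]
    ring
  have hfB : frobSq B = 1 := by
    rw [frobSq, hB, conjT_std, Matrix.single_mul_single_same,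
      Matrix.trace_single_eq_same]
    simp
  rw [hf, hfA, hfB, hav, hbv]
  rw [show ((-(ε₁ * b) : ℝ) : ℂ) - ((a : ℝ) : ℂ) = (((-(ε₁ * b)) - a : ℝ) : ℂ) by push_cast; ring]
  rw [show ((-(ε₁ * b) : ℝ) : ℂ) - (q : ℂ) * ((a : ℝ) : ℂ) = (((-(ε₁ * b)) - q * a : ℝ) : ℂ) by push_cast; ring]
  rw [← Complex.ofReal_mul, Complex.ofReal_re, mul_one]
  exact key
end
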